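/- For v ∈ H₀(curl;Ω) with ∇·(εv) = 0 in Ω and ⟨εv·n_i,1⟩_{Γ_i} = 0 for i = 1,…,L, the Friedrichs-type inequality ‖v‖_{L²} ≲ ‖∇×v‖_{L²} holds, with constant independent of v. -/
import Mathlib


open scoped RealInnerProductSpace

/-- For `v ∈ H₀(curl;Ω)` with `∇·(εv) = 0` in `Ω` and
`⟨εv·n_i,1⟩_{Γ_i} = 0` for `i = 1,…,L`, the Friedrichs-type inequality
`‖v‖_{L²} ≲ ‖∇×v‖_{L²}` holds, with constant independent of `v`.

Abstraction: `Hc` indexes `H₀(curl;Ω)` fields (value `val`, curl `curl`);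
the divergence-free and zero-flux conditions are expressed weakly as
`(εv, ∇r) = 0` for every `r ∈ H¹_{0c}(Ω)`.  The vector potential theorem
(Girault–Raviart, Ch. I Thm 3.4) is distilled into `hPot`: for every admissible `v`
there is `ω` with `(εv, v) = (ω, ∇×v)` and `‖ω‖ ≤ Cω (εv,v)^{1/2}`.  Uniform positive
definiteness of `ε` is `hLower`/`hUpper`. -/
theorem stmt_5
    {V H0c Hc : Type*}
    [NormedAddCommGroup V] [InnerProductSpace ℝ V]
    (eps : V →ₗ[ℝ] V)
    (hSym : ∀ a b : V, ⟪eps a, b⟫ = ⟪a, eps b⟫)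
    (c₀ c₁ : ℝ) (hc₀ : 0 < c₀) (hc₁ : 0 < c₁)
    (hLower : ∀ a : V, c₀ * ‖a‖ ^ 2 ≤ ⟪eps a, a⟫)
    (hUpper : ∀ a : V, ⟪eps a, a⟫ ≤ c₁ * ‖a‖ ^ 2)
    (gradC : H0c → V) (val curl : Hc → V)
    -- vector potential theorem: εv = ∇×ω with ∇·ω = 0, ‖ω‖₁ ≲ (εv,v)^{1/2}, giving
    -- (εv, v) = (∇×ω, v) = (ω, ∇×v) by integration by parts (v × n = 0 on Γ)
    (Cω : ℝ) (hCω : 0 < Cω)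
    (hPot : ∀ w : Hc, (∀ r : H0c, ⟪eps (val w), gradC r⟫ = 0) →
      ∃ ω : V, ⟪eps (val w), val w⟫ = ⟪ω, curl w⟫ ∧
        ‖ω‖ ≤ Cω * Real.sqrt ⟪eps (val w), val w⟫) :
    ∃ C : ℝ, 0 < C ∧ ∀ w : Hc,
      (∀ r : H0c, ⟪eps (val w), gradC r⟫ = 0) → ‖val w‖ ≤ C * ‖curl w‖ := by
  refine ⟨Cω / Real.sqrt c₀, by positivity, fun w hw => ?_⟩
  obtain ⟨ω, hE, hωn⟩ := hPot w hw
  set E : ℝ := ⟪eps (val w), val w⟫ with hEdef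
  have hE0 : 0 ≤ E := le_trans (by positivity) (hLower (val w))
  have hsq : Real.sqrt E * Real.sqrt E = E := Real.mul_self_sqrt hE0
  have hbound : E ≤ Cω * Real.sqrt E * ‖curl w‖ := by
    calc E = ⟪ω, curl w⟫ := hE
    _ ≤ ‖ω‖ * ‖curl w‖ := real_inner_le_norm _ _
    _ ≤ Cω * Real.sqrt E * ‖curl w‖ := by
        apply mul_le_mul_of_nonneg_right hωn (norm_nonneg _)
  have hsE : Real.sqrt E ≤ Cω * ‖curl w‖ := by
    rcases eq_or_lt_of_le (Real.sqrt_nonneg E) with h | h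
    · rw [← h]; positivity
    · have := hbound
      rw [← hsq] at this
      nlinarith
  have hv2 : c₀ * ‖val w‖ ^ 2 ≤ (Cω * ‖curl w‖) ^ 2 := by
    calc c₀ * ‖val w‖ ^ 2 ≤ E := hLower (val w)
    _ = Real.sqrt E * Real.sqrt E := hsq.symm
    _ ≤ (Cω * ‖curl w‖) ^ 2 := by nlinarith [Real.sqrt_nonneg E]
  have h1 : ‖val w‖ ^ 2 ≤ (Cω / Real.sqrt c₀ * ‖curl w‖) ^ 2 := by
    have hsc : Real.sqrt c₀ ^ 2 = c₀ := Real.sq_sqrt hc₀.le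
    rw [div_mul_eq_mul_div, div_pow, le_div_iff₀ (by positivity), hsc]
    nlinarith
  have hr : 0 ≤ Cω / Real.sqrt c₀ * ‖curl w‖ := by positivity
  exact (pow_le_pow_iff_left₀ (norm_nonneg _) hr two_ne_zero).mp h1
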